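/- Let ω(ξ,η) = ξ²·coth(ξ) − ξ − η²/ξ and Ω(k₁,k₂) = ω(ξ₁,η₁) + ω(ξ₂,η₂) + ω(−ξ₁−ξ₂,−η₁−η₂) for k₁ = (ξ₁,η₁), k₂ = (ξ₂,η₂), and write ⟨ξ⟩ = √(1+ξ²). Then there exist constants c > 0 and ε ∈ (0,1) such that for all real ξ₁, ξ₂, η₁, η₂ with ξ₁ ≠ 0 and 0 < |ξ₁| ≤ ε|ξ₂| (the low-high regime), one has |Ω(k₁,k₂)| ≥ c·(|ξ₁|·ξ₂²/⟨ξ₂⟩)·( 1 + (⟨ξ₂⟩/ξ₁²)·((η₁+η₂)/(ξ₁+ξ₂) − η₂/ξ₂)² ). -/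

import Mathlib

/-- Hyperbolic cotangent. -/
noncomputable def coth (x : ℝ) : ℝ := Real.cosh x / Real.sinh x

/-- Dispersion relation of the depth-1 Camassa–Choi equation. -/
noncomputable def omega1 (ξ η : ℝ) : ℝ := ξ ^ 2 * coth ξ - ξ - η ^ 2 / ξ

/-- Resonance function restricted to the hyperplane `k₁ + k₂ + k₃ = 0`. -/
noncomputable def Omega1 (ξ₁ η₁ ξ₂ η₂ : ℝ) : ℝ :=
  omega1 ξ₁ η₁ + omega1 ξ₂ η₂ + omega1 (-(ξ₁ + ξ₂)) (-(η₁ + η₂))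

/-- Japanese bracket `⟨ξ⟩ = √(1+ξ²)`. -/
noncomputable def jb (ξ : ℝ) : ℝ := Real.sqrt (1 + ξ ^ 2)

namespace CCaux

noncomputable def gg (x : ℝ) : ℝ := x ^ 2 * coth x

lemma coth_neg (x : ℝ) : coth (-x) = - coth x := by
  unfold coth
  rw [Real.cosh_neg, Real.sinh_neg, div_neg]

lemma gg_neg (x : ℝ) : gg (-x) = - gg x := by
  unfold gg
  rw [coth_neg]
  ring

/- ### Monotonicity helper -/
lemma nonneg_aux {f f' : ℝ → ℝ} (hd : ∀ x, HasDerivAt f (f' x) x)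
    (h0 : f 0 = 0) (h1 : ∀ x, 0 ≤ x → x ≤ 1 → 0 ≤ f' x)
    {x : ℝ} (hx0 : 0 ≤ x) (hx1 : x ≤ 1) : 0 ≤ f x := by
  have mono : MonotoneOn f (Set.Icc (0:ℝ) 1) := by
    apply monotoneOn_of_deriv_nonneg (convex_Icc 0 1)
    · exact fun y _ => (hd y).continuousAt.continuousWithinAt
    · exact fun y _ => (hd y).differentiableAt.differentiableWithinAt
    · intro y hy
      rw [interior_Icc] at hy
      rw [(hd y).deriv]
      exact h1 y hy.1.le hy.2.le
  calc (0:ℝ) = f 0 := h0.symm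
  _ ≤ f x := mono (Set.mem_Icc.2 ⟨le_refl 0, by norm_num⟩) (Set.mem_Icc.2 ⟨hx0, hx1⟩) hx0

lemma hek (k x : ℝ) : HasDerivAt (fun y => Real.exp (k*y)) (k * Real.exp (k*x)) x := by
  have h := (Real.hasDerivAt_exp (k*x)).comp x ((hasDerivAt_id x).const_mul k)
  exact h.congr_deriv (by ring)

lemma hquad (p q r x : ℝ) : HasDerivAt (fun y : ℝ => p*y^2 + q*y + r) (2*p*x + q) x := by
  have h1 := (hasDerivAt_pow 2 x).const_mul p
  have h2 := (hasDerivAt_id x).const_mul q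
  have h := (h1.add h2).add_const r
  refine h.congr_deriv ?_
  simp [pow_one]
  ring

lemma hexpquad (k p q r x : ℝ) :
    HasDerivAt (fun y : ℝ => Real.exp (k*y) * (p*y^2+q*y+r))
      (Real.exp (k*x) * ((k*p)*x^2 + (k*q+2*p)*x + (k*r+q))) x := by
  have h := (hek k x).mul (hquad p q r x)
  refine h.congr_deriv ?_
  ring

/- ### The derivative chain for the small-x bound -/
lemma chainG {x : ℝ} (hx0 : 0 ≤ x) (hx1 : x ≤ 1) :
    0 ≤ Real.exp (2*x)*(-8*x^2+20*x+5) - (6*x^2+18*x+5) := by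
  have hd : ∀ y : ℝ, HasDerivAt (fun y : ℝ => Real.exp (2*y)*(-8*y^2+20*y+5) - (6*y^2+18*y+5))
      (Real.exp (2*y)*(-16*y^2+24*y+30) - (12*y+18)) y := by
    intro y
    have h := (hexpquad 2 (-8) 20 5 y).sub (hquad 6 18 5 y)
    refine h.congr_deriv ?_
    ring
  have h1 : ∀ y : ℝ, 0 ≤ y → y ≤ 1 → 0 ≤ Real.exp (2*y)*(-16*y^2+24*y+30) - (12*y+18) := by
    intro y hy0 hy1
    have he : 1 + 2*y ≤ Real.exp (2*y) := by
      have := Real.add_one_le_exp (2*y); linarith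
    have hpos : (0:ℝ) < -16*y^2+24*y+30 := by nlinarith
    have : (1+2*y)*(-16*y^2+24*y+30) ≤ Real.exp (2*y)*(-16*y^2+24*y+30) :=
      mul_le_mul_of_nonneg_right he hpos.le
    nlinarith [mul_nonneg (mul_nonneg hy0 hy0) (sub_nonneg.2 hy1)]
  have := nonneg_aux hd (by norm_num) h1 hx0 hx1
  simpa using this

lemma chainF2 {x : ℝ} (hx0 : 0 ≤ x) (hx1 : x ≤ 1) :
    0 ≤ Real.exp (4*x)*(-8*x^2+24*x+(-1)) + Real.exp (2*x)*(-12*x^2+(-24)*x+2) - 1 := by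
  have hd : ∀ y : ℝ, HasDerivAt (fun y : ℝ => Real.exp (4*y)*(-8*y^2+24*y+(-1)) + Real.exp (2*y)*(-12*y^2+(-24)*y+2) - 1)
      (Real.exp (4*y)*(-32*y^2+80*y+20) + Real.exp (2*y)*(-24*y^2-72*y-20)) y := by
    intro y
    have h := ((hexpquad 4 (-8) 24 (-1) y).add (hexpquad 2 (-12) (-24) 2 y)).sub_const 1
    refine h.congr_deriv ?_
    ring
  have h1 : ∀ y : ℝ, 0 ≤ y → y ≤ 1 → 0 ≤ Real.exp (4*y)*(-32*y^2+80*y+20) + Real.exp (2*y)*(-24*y^2-72*y-20) := by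
    intro y hy0 hy1
    have hg := chainG hy0 hy1
    have h4 : Real.exp (4*y) = Real.exp (2*y) * Real.exp (2*y) := by
      rw [← Real.exp_add]; ring_nf
    calc (0:ℝ) ≤ (4*Real.exp (2*y)) * (Real.exp (2*y)*(-8*y^2+20*y+5) - (6*y^2+18*y+5)) :=
          mul_nonneg (by positivity) hg
    _ = Real.exp (4*y)*(-32*y^2+80*y+20) + Real.exp (2*y)*(-24*y^2-72*y-20) := by
          rw [h4]; ring
  have := nonneg_aux hd (by norm_num) h1 hx0 hx1
  simpa using this

lemma chainF1 {x : ℝ} (hx0 : 0 ≤ x) (hx1 : x ≤ 1) :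
    0 ≤ Real.exp (4*x)*(-2*x^2+7*x+(-2)) + Real.exp (2*x)*(-6*x^2+(-6)*x+4) - (x+2) := by
  have hd : ∀ y : ℝ, HasDerivAt (fun y : ℝ => Real.exp (4*y)*(-2*y^2+7*y+(-2)) + Real.exp (2*y)*(-6*y^2+(-6)*y+4) - (0*y^2+1*y+2))
      (Real.exp (4*y)*(-8*y^2+24*y+(-1)) + Real.exp (2*y)*(-12*y^2+(-24)*y+2) - 1) y := by
    intro y
    have h := ((hexpquad 4 (-2) 7 (-2) y).add (hexpquad 2 (-6) (-6) 4 y)).sub (hquad 0 1 2 y)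
    refine h.congr_deriv ?_
    ring
  have h1 : ∀ y : ℝ, 0 ≤ y → y ≤ 1 → 0 ≤ Real.exp (4*y)*(-8*y^2+24*y+(-1)) + Real.exp (2*y)*(-12*y^2+(-24)*y+2) - 1 :=
    fun y hy0 hy1 => chainF2 hy0 hy1
  have := nonneg_aux hd (by norm_num) h1 hx0 hx1
  nlinarith [this]

lemma chainF0 {x : ℝ} (hx0 : 0 ≤ x) (hx1 : x ≤ 1) :
    0 ≤ Real.exp (4*x)*(2*x-1-x^2/2) + Real.exp (2*x)*(2-3*x^2) - (1+2*x+x^2/2) := by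
  have hd : ∀ y : ℝ, HasDerivAt (fun y : ℝ => Real.exp (4*y)*(-1/2*y^2+2*y+(-1)) + Real.exp (2*y)*(-3*y^2+0*y+2) - (1/2*y^2+2*y+1))
      (Real.exp (4*y)*(-2*y^2+7*y+(-2)) + Real.exp (2*y)*(-6*y^2+(-6)*y+4) - (y+2)) y := by
    intro y
    have h := ((hexpquad 4 (-1/2) 2 (-1) y).add (hexpquad 2 (-3) 0 2 y)).sub (hquad (1/2) 2 1 y)
    refine h.congr_deriv ?_
    ring
  have h1 : ∀ y : ℝ, 0 ≤ y → y ≤ 1 → 0 ≤ Real.exp (4*y)*(-2*y^2+7*y+(-2)) + Real.exp (2*y)*(-6*y^2+(-6)*y+4) - (y+2) :=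
    fun y hy0 hy1 => chainF1 hy0 hy1
  have := nonneg_aux hd (by norm_num) h1 hx0 hx1
  nlinarith [this]

/- ### Pointwise derivative lower bound in u-form -/
lemma keyP1 {x u : ℝ} (hx0 : 0 < x) (hx1 : x ≤ 1) (hu : u = Real.exp x) :
    0 ≤ 2*x*(u^4-1) - 4*x^2*u^2 - (1+x^2/2)*(u^2-1)^2 := by
  have e2 : Real.exp (2*x) = u^2 := by rw [two_mul, Real.exp_add, hu]; ring
  have e4 : Real.exp (4*x) = u^4 := by
    rw [show (4:ℝ)*x = 2*x + (2*x) by ring, Real.exp_add, e2]; ring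
  have h := chainF0 hx0.le hx1
  rw [e2, e4] at h
  nlinarith [h]

lemma keyP2 {x u : ℝ} (hx : 1 ≤ x) (hu : 1+x+x^2/2+x^3/6 ≤ u) :
    0 ≤ 2*x*(u^4-1) - 4*x^2*u^2 - (1+x/2)*(u^2-1)^2 := by
  have hu0 : (0:ℝ) < u := by nlinarith
  have hQ0 : (0:ℝ) ≤ 1+x+x^2/2+x^3/6 := by positivity
  have hsq : (1+x+x^2/2+x^3/6)^2 ≤ u^2 := pow_le_pow_left₀ hQ0 hu 2
  have ht : (0:ℝ) ≤ x - 1 := by linarith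
  have hbase : 0 ≤ (2*x-1-x/2)*((1+x+x^2/2+x^3/6)^2)^2 + (2+x-4*x^2)*(1+x+x^2/2+x^3/6)^2 - (2*x+1+x/2) := by
    nlinarith [pow_nonneg ht 2, pow_nonneg ht 3, pow_nonneg ht 4, pow_nonneg ht 5, pow_nonneg ht 6, pow_nonneg ht 7, pow_nonneg ht 8, pow_nonneg ht 9, pow_nonneg ht 10, pow_nonneg ht 11, pow_nonneg ht 12, pow_nonneg ht 13]
  have hmono : 0 ≤ (u^2 - (1+x+x^2/2+x^3/6)^2) * ((2*x-1-x/2)*(u^2+(1+x+x^2/2+x^3/6)^2) + (2+x-4*x^2)) := by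
    apply mul_nonneg (by linarith)
    nlinarith [pow_nonneg ht 2, pow_nonneg ht 3, pow_nonneg ht 4, pow_nonneg ht 5, pow_nonneg ht 6, pow_nonneg ht 7, sq_nonneg u, hsq]
  nlinarith [hbase, hmono]

/-- lower-order Taylor lower bound for exp -/
lemma exp_taylor4 {x : ℝ} (hx : 0 ≤ x) : 1+x+x^2/2+x^3/6 ≤ Real.exp x := by
  have h := Real.sum_le_exp_of_nonneg hx 4
  simp [Finset.sum_range_succ] at h
  norm_num [Nat.factorial] at h
  linarith

lemma exp_taylor6 {x : ℝ} (hx : 0 ≤ x) : 1+x+x^2/2+x^3/6+x^4/24+x^5/120 ≤ Real.exp x := by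
  have h := Real.sum_le_exp_of_nonneg hx 6
  simp [Finset.sum_range_succ] at h
  norm_num [Nat.factorial] at h
  linarith

/- ### derivative of gg -/
noncomputable def gd (x : ℝ) : ℝ := 2*x*(Real.cosh x/Real.sinh x) - x^2/(Real.sinh x)^2

lemma hasDerivAt_gg {t : ℝ} (ht : 0 < t) : HasDerivAt gg (gd t) t := by
  have hs : Real.sinh t ≠ 0 := ne_of_gt (by positivity)
  have hdiv := (Real.hasDerivAt_cosh t).div (Real.hasDerivAt_sinh t) hs
  have h := (hasDerivAt_pow 2 t).mul hdiv
  have hgg : gg = fun y : ℝ => y^2 * (Real.cosh y / Real.sinh y) := by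
    funext y; rfl
  rw [hgg]
  refine h.congr_deriv ?_
  have hid : Real.cosh t^2 - Real.sinh t^2 = 1 := Real.cosh_sq_sub_sinh_sq t
  unfold gd
  rw [Pi.div_apply]
  field_simp
  linear_combination (-t^2) * hid

/-- pointwise lower bound for gd -/
lemma gd_lower {x : ℝ} (hx : 0 < x) : 1 + (1/2) * min (x^2) x ≤ gd x := by
  set u : ℝ := Real.exp x with hu
  have hu1 : 1 < u := by
    have := Real.add_one_le_exp x; rw [← hu] at this; linarith
  have hu0 : 0 < u := by linarith
  have h21 : (0:ℝ) < u^2 - 1 := by nlinarith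
  have hs : Real.sinh x = (u^2-1)/(2*u) := by
    rw [Real.sinh_eq, Real.exp_neg, ← hu]; field_simp
  have hc : Real.cosh x = (u^2+1)/(2*u) := by
    rw [Real.cosh_eq, Real.exp_neg, ← hu]; field_simp
  have key : 0 ≤ 2*x*(u^4-1) - 4*x^2*u^2 - (1 + (1/2) * min (x^2) x)*(u^2-1)^2 := by
    rcases le_total x 1 with h1 | h1
    · have hmin : min (x^2) x = x^2 := min_eq_left (by nlinarith)
      rw [hmin]
      have := keyP1 hx h1 hu
      nlinarith [this]
    · have hmin : min (x^2) x = x := min_eq_right (by nlinarith)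
      rw [hmin]
      have hT := exp_taylor4 (le_trans zero_le_one h1 : (0:ℝ) ≤ x)
      rw [← hu] at hT
      have := keyP2 h1 hT
      nlinarith [this]
  have expand : gd x - (1 + (1/2) * min (x^2) x) =
      (2*x*(u^4-1) - 4*x^2*u^2 - (1 + (1/2) * min (x^2) x)*(u^2-1)^2)/(u^2-1)^2 := by
    unfold gd
    rw [hs, hc]
    field_simp
    ring
  have : 0 ≤ gd x - (1 + (1/2) * min (x^2) x) := by
    rw [expand]
    positivity
  linarith

/- ### mean value estimate -/
lemma g_diff_ge {x y : ℝ} (hx : 0 < x) (hxy : x ≤ y) :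
    (y - x) * (1 + (1/2) * min (x^2) x) ≤ gg y - gg x := by
  rcases eq_or_lt_of_le hxy with rfl | hlt
  · simp
  obtain ⟨θ, hθ, hslope⟩ := exists_hasDerivAt_eq_slope gg gd hlt
    (fun t htmem => (hasDerivAt_gg (lt_of_lt_of_le hx htmem.1)).continuousAt.continuousWithinAt)
    (fun t htmem => hasDerivAt_gg (lt_trans hx htmem.1))
  have hθx : x < θ := hθ.1
  have hθ0 : 0 < θ := lt_trans hx hθx
  have hlow : 1 + (1/2) * min (x^2) x ≤ gd θ := by
    have h := gd_lower hθ0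
    have hminmono : min (x^2) x ≤ min (θ^2) θ :=
      min_le_min (by nlinarith) hθx.le
    linarith
  have hyx : 0 < y - x := by linarith
  rw [hslope] at hlow
  calc (y - x) * (1 + (1/2) * min (x^2) x) ≤ (y-x) * ((gg y - gg x)/(y-x)) := by
        apply mul_le_mul_of_nonneg_left hlow hyx.le
  _ = gg y - gg x := by field_simp

/- ### upper bounds for gg -/
lemma gg_le_small {a : ℝ} (h0 : 0 < a) (h1 : a ≤ 1) : gg a ≤ a + a^3/3 := by
  set u : ℝ := Real.exp a with hu
  have hu1 : 1 < u := by
    have := Real.add_one_le_exp a; rw [← hu] at this; linarith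
  have h21 : (0:ℝ) < u^2 - 1 := by nlinarith
  have hs : Real.sinh a = (u^2-1)/(2*u) := by
    rw [Real.sinh_eq, Real.exp_neg, ← hu]; field_simp
  have hc : Real.cosh a = (u^2+1)/(2*u) := by
    rw [Real.cosh_eq, Real.exp_neg, ← hu]; field_simp
  have hT := exp_taylor6 h0.le
  rw [← hu] at hT
  have hL2 : 3+3*a+a^2 ≤ u^2*(3-3*a+a^2) := by
    have hpos : (0:ℝ) < 1+a+a^2/2+a^3/6+a^4/24+a^5/120 := by positivity
    have hsq : (1+a+a^2/2+a^3/6+a^4/24+a^5/120)^2 ≤ u^2 := by nlinarith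
    have h3 : (0:ℝ) < 3-3*a+a^2 := by nlinarith [sq_nonneg (a-1)]
    nlinarith [mul_le_mul_of_nonneg_right hsq h3.le, pow_nonneg h0.le 5, pow_nonneg h0.le 6, pow_nonneg h0.le 7, pow_nonneg h0.le 8, pow_nonneg h0.le 9, pow_nonneg h0.le 10, mul_nonneg (pow_nonneg h0.le 5) (sub_nonneg.2 h1), mul_nonneg (pow_nonneg h0.le 6) (sub_nonneg.2 h1), mul_nonneg (pow_nonneg h0.le 7) (sub_nonneg.2 h1), mul_nonneg (pow_nonneg h0.le 8) (sub_nonneg.2 h1), mul_nonneg (pow_nonneg h0.le 9) (sub_nonneg.2 h1)]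
  have expand : gg a = a^2 * ((u^2+1)/(u^2-1)) := by
    unfold gg coth
    rw [hs, hc]
    field_simp
    try ring
  have expand2 : gg a = a^2*(u^2+1)/(u^2-1) := by rw [expand]; ring
  rw [expand2, div_le_iff₀ h21]
  nlinarith [mul_le_mul_of_nonneg_left hL2 (by positivity : (0:ℝ) ≤ a/3)]

lemma gg_le_all {a : ℝ} (h0 : 0 < a) : gg a ≤ a^2 + a := by
  set u : ℝ := Real.exp a with hu
  have hua : 1 + a ≤ u := by
    have := Real.add_one_le_exp a; rw [← hu] at this; linarith
  have hu1 : 1 < u := by linarith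
  have h21 : (0:ℝ) < u^2 - 1 := by nlinarith
  have hs : Real.sinh a = (u^2-1)/(2*u) := by
    rw [Real.sinh_eq, Real.exp_neg, ← hu]; field_simp
  have hc : Real.cosh a = (u^2+1)/(2*u) := by
    rw [Real.cosh_eq, Real.exp_neg, ← hu]; field_simp
  have expand : gg a = a^2 * ((u^2+1)/(u^2-1)) := by
    unfold gg coth
    rw [hs, hc]
    field_simp
    try ring
  have expand2 : gg a = a^2*(u^2+1)/(u^2-1) := by rw [expand]; ring
  rw [expand2, div_le_iff₀ h21]
  have husq : (1+a)^2 ≤ u^2 := by nlinarith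
  nlinarith [husq, h0]


/- ### difference lower bounds -/
lemma FA {a b : ℝ} (ha : 0 < a) (hab : 8*a ≤ b) :
    (a/4) * min (b^2) b ≤ gg (a+b) - gg b - gg a := by
  have hb : 0 < b := by linarith
  have hd := g_diff_ge hb (by linarith : b ≤ a+b)
  have hd' : a * (1 + (1/2) * min (b^2) b) ≤ gg (a+b) - gg b := by
    have e : a + b - b = a := by ring
    rw [e] at hd; exact hd
  have hup : gg a - a ≤ (a/4) * min (b^2) b := by
    rcases le_total a 1 with h1 | h1
    · have hsm := gg_le_small ha h1
      rcases le_total b 1 with hb1 | hb1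
      · have hmin : min (b^2) b = b^2 := min_eq_left (by nlinarith)
        rw [hmin]
        have ha2 : a^2 ≤ b^2/64 := by nlinarith
        nlinarith [mul_le_mul_of_nonneg_left ha2 ha.le]
      · have hmin : min (b^2) b = b := min_eq_right (by nlinarith)
        rw [hmin]
        have ha2 : a^2 ≤ b/8 := by nlinarith
        nlinarith [mul_le_mul_of_nonneg_left ha2 ha.le]
    · have hal := gg_le_all ha
      have hmin : min (b^2) b = b := min_eq_right (by nlinarith)
      rw [hmin]
      nlinarith [mul_le_mul_of_nonneg_left hab ha.le]
  have hmn : 0 ≤ min (b^2) b := le_min (by positivity) hb.le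
  nlinarith [hd', hup, mul_nonneg ha.le hmn]

lemma FB {a b : ℝ} (ha : 0 < a) (hab : 8*a ≤ b) :
    (a/8) * min (b^2) b ≤ gg b - gg (b-a) - gg a := by
  have hb : 0 < b := by linarith
  have hba : 0 < b - a := by linarith
  have hd := g_diff_ge hba (by linarith : b - a ≤ b)
  have hd' : a * (1 + (1/2) * min ((b-a)^2) (b-a)) ≤ gg b - gg (b-a) := by
    have e : b - (b - a) = a := by ring
    rw [e] at hd; exact hd
  have hmin2 : (49/64) * min (b^2) b ≤ min ((b-a)^2) (b-a) := by
    apply le_min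
    · have h' := min_le_left (b^2) b
      nlinarith
    · have h' := min_le_right (b^2) b
      nlinarith
  have hup : gg a - a ≤ (a/4) * min (b^2) b := by
    rcases le_total a 1 with h1 | h1
    · have hsm := gg_le_small ha h1
      rcases le_total b 1 with hb1 | hb1
      · have hmin : min (b^2) b = b^2 := min_eq_left (by nlinarith)
        rw [hmin]
        have ha2 : a^2 ≤ b^2/64 := by nlinarith
        nlinarith [mul_le_mul_of_nonneg_left ha2 ha.le]
      · have hmin : min (b^2) b = b := min_eq_right (by nlinarith)
        rw [hmin]
        have ha2 : a^2 ≤ b/8 := by nlinarith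
        nlinarith [mul_le_mul_of_nonneg_left ha2 ha.le]
    · have hal := gg_le_all ha
      have hmin : min (b^2) b = b := min_eq_right (by nlinarith)
      rw [hmin]
      nlinarith [mul_le_mul_of_nonneg_left hab ha.le]
  have hmn : 0 ≤ min (b^2) b := le_min (by positivity) hb.le
  nlinarith [hd', hup, mul_le_mul_of_nonneg_left hmin2 ha.le, mul_nonneg ha.le hmn]

/- ### jb facts -/
lemma jb_pos (b : ℝ) : 0 < jb b := by
  unfold jb; positivity

lemma jb_neg (b : ℝ) : jb (-b) = jb b := by
  unfold jb; rw [neg_pow]; norm_num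

lemma min_ge_jb {b : ℝ} (hb : 0 < b) : b^2 / jb b ≤ min (b^2) b := by
  have hj0 : 0 < jb b := jb_pos b
  have hj1 : 1 ≤ jb b := by
    unfold jb
    rw [Real.one_le_sqrt]
    nlinarith
  have hjb : b ≤ jb b := by
    unfold jb
    rw [Real.le_sqrt' hb]
    nlinarith
  apply le_min
  · rw [div_le_iff₀ hj0]
    nlinarith [sq_nonneg b]
  · rw [div_le_iff₀ hj0]
    nlinarith

/- ### algebraic decomposition -/
lemma Omega_decomp (ξ₁ η₁ ξ₂ η₂ : ℝ) (h1 : ξ₁ ≠ 0) (h2 : ξ₂ ≠ 0) (h12 : ξ₁+ξ₂ ≠ 0) :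
    Omega1 ξ₁ η₁ ξ₂ η₂ = (gg ξ₁ + gg ξ₂ - gg (ξ₁+ξ₂))
      - (ξ₂*(ξ₁+ξ₂)/ξ₁) * ((η₁+η₂)/(ξ₁+ξ₂) - η₂/ξ₂)^2 := by
  have h12' : -(ξ₁+ξ₂) ≠ 0 := neg_ne_zero.2 h12
  unfold Omega1 omega1 gg
  rw [coth_neg, neg_sq, div_neg]
  field_simp
  ring

lemma omega1_neg (ξ η : ℝ) : omega1 (-ξ) (-η) = - omega1 ξ η := by
  unfold omega1
  rw [coth_neg, neg_sq, neg_sq, div_neg]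
  ring

lemma Omega1_neg (ξ₁ η₁ ξ₂ η₂ : ℝ) :
    Omega1 (-ξ₁) (-η₁) (-ξ₂) (-η₂) = - Omega1 ξ₁ η₁ ξ₂ η₂ := by
  unfold Omega1
  rw [show (-ξ₁ + -ξ₂ : ℝ) = -(ξ₁+ξ₂) by ring, show (-η₁ + -η₂ : ℝ) = -(η₁+η₂) by ring,
    neg_neg, neg_neg, omega1_neg, omega1_neg]
  have h := omega1_neg (-(ξ₁+ξ₂)) (-(η₁+η₂))
  rw [neg_neg, neg_neg] at h
  linarith


set_option maxHeartbeats 1000000 in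
lemma core (ξ₁ ξ₂ η₁ η₂ : ℝ) (h1 : ξ₁ ≠ 0) (h2pos : 0 < ξ₂)
    (hle : |ξ₁| ≤ 1/8 * ξ₂) :
    |Omega1 ξ₁ η₁ ξ₂ η₂| ≥
      1/8 * (|ξ₁| * ξ₂ ^ 2 / jb ξ₂) *
        (1 + jb ξ₂ / ξ₁ ^ 2 * ((η₁ + η₂) / (ξ₁ + ξ₂) - η₂ / ξ₂) ^ 2) := by
  set r : ℝ := (η₁ + η₂) / (ξ₁ + ξ₂) - η₂ / ξ₂ with hr
  have hJ : 0 < jb ξ₂ := jb_pos ξ₂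
  have hM := min_ge_jb h2pos
  have hr2 : 0 ≤ r^2 := sq_nonneg r
  rcases h1.lt_or_gt with hxneg | hxpos
  · -- ξ₁ < 0
    have ha : 0 < -ξ₁ := by linarith
    have habs : |ξ₁| = -ξ₁ := abs_of_neg hxneg
    rw [habs] at hle ⊢
    have hab : 8 * (-ξ₁) ≤ ξ₂ := by linarith
    have h12 : 0 < ξ₁ + ξ₂ := by linarith
    have hdec := Omega_decomp ξ₁ η₁ ξ₂ η₂ h1 (ne_of_gt h2pos) (ne_of_gt h12)
    rw [← hr] at hdec
    have hFB := FB ha hab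
    have e1 : ξ₂ - -ξ₁ = ξ₁ + ξ₂ := by ring
    rw [e1, gg_neg] at hFB
    -- hFB : (-ξ₁/8) * min (ξ₂^2) ξ₂ ≤ gg ξ₂ - gg (ξ₁+ξ₂) + gg ξ₁   (since gg(-(-ξ₁)) … careful)
    have hSneg : ξ₂^2 / (-ξ₁) * (1/8) ≤ -(ξ₂*(ξ₁+ξ₂)/ξ₁) := by
      rw [show -(ξ₂*(ξ₁+ξ₂)/ξ₁) = ξ₂*(ξ₁+ξ₂)/(-ξ₁) from by rw [div_neg]]
      rw [div_mul_eq_mul_div, div_le_div_iff₀ ha ha]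
      nlinarith [mul_pos ha h2pos, mul_pos (mul_pos ha ha) h2pos, mul_pos (mul_pos h2pos h2pos) ha]
    have hOmega_ge : (-ξ₁/8) * min (ξ₂^2) ξ₂ + (ξ₂^2/(-ξ₁) * (1/8)) * r^2 ≤ Omega1 ξ₁ η₁ ξ₂ η₂ := by
      rw [hdec]
      have h2' : (ξ₂^2/(-ξ₁) * (1/8)) * r^2 ≤ (-(ξ₂*(ξ₁+ξ₂)/ξ₁)) * r^2 :=
        mul_le_mul_of_nonneg_right hSneg hr2
      nlinarith [hFB, h2']
    have hO0 : 0 ≤ Omega1 ξ₁ η₁ ξ₂ η₂ := by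
      have t1 : 0 ≤ (-ξ₁/8) * min (ξ₂^2) ξ₂ := by
        apply mul_nonneg (by linarith)
        exact le_trans (by positivity) hM
      have t2 : 0 ≤ (ξ₂^2/(-ξ₁) * (1/8)) * r^2 := by positivity
      linarith
    rw [abs_of_nonneg hO0]
    have hexp : 1/8 * (-ξ₁ * ξ₂ ^ 2 / jb ξ₂) * (1 + jb ξ₂ / ξ₁ ^ 2 * r ^ 2)
        = 1/8 * ((-ξ₁) * ξ₂^2 / jb ξ₂) + (ξ₂^2/(-ξ₁) * (1/8)) * r^2 := by
      field_simp
      ring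
    rw [ge_iff_le, hexp]
    have hMge : 1/8 * ((-ξ₁) * ξ₂^2 / jb ξ₂) ≤ (-ξ₁/8) * min (ξ₂^2) ξ₂ := by
      have hstep := mul_le_mul_of_nonneg_left hM (by linarith : (0:ℝ) ≤ -ξ₁/8)
      have e1 : 1/8 * ((-ξ₁) * ξ₂^2 / jb ξ₂) = ((-ξ₁)/8) * (ξ₂^2 / jb ξ₂) := by ring
      have e2 : (-ξ₁/8) * (ξ₂^2 / jb ξ₂) = ((-ξ₁)/8) * (ξ₂^2 / jb ξ₂) := by ring
      rw [e1, ← e2]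
      exact hstep
    linarith
  · -- ξ₁ > 0
    have habs : |ξ₁| = ξ₁ := abs_of_pos hxpos
    rw [habs] at hle ⊢
    have hab : 8 * ξ₁ ≤ ξ₂ := by linarith
    have h12 : 0 < ξ₁ + ξ₂ := by linarith
    have hdec := Omega_decomp ξ₁ η₁ ξ₂ η₂ h1 (ne_of_gt h2pos) (ne_of_gt h12)
    rw [← hr] at hdec
    have hFA := FA hxpos hab
    have hS : ξ₂^2 / ξ₁ * (1/8) ≤ ξ₂*(ξ₁+ξ₂)/ξ₁ := by
      rw [div_mul_eq_mul_div, div_le_div_iff₀ hxpos hxpos]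
      nlinarith [mul_pos hxpos h2pos, mul_pos (mul_pos hxpos hxpos) h2pos, mul_pos (mul_pos h2pos h2pos) hxpos]
    have hOmega_le : Omega1 ξ₁ η₁ ξ₂ η₂ ≤ -((ξ₁/4) * min (ξ₂^2) ξ₂) - (ξ₂^2/ξ₁ * (1/8)) * r^2 := by
      rw [hdec]
      have h2' : (ξ₂^2/ξ₁ * (1/8)) * r^2 ≤ (ξ₂*(ξ₁+ξ₂)/ξ₁) * r^2 :=
        mul_le_mul_of_nonneg_right hS hr2
      nlinarith [hFA, h2']
    have hO0 : Omega1 ξ₁ η₁ ξ₂ η₂ ≤ 0 := by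
      have t1 : 0 ≤ (ξ₁/4) * min (ξ₂^2) ξ₂ := by
        apply mul_nonneg (by linarith)
        exact le_trans (by positivity) hM
      have t2 : 0 ≤ (ξ₂^2/ξ₁ * (1/8)) * r^2 := by positivity
      linarith
    rw [abs_of_nonpos hO0]
    have hexp : 1/8 * (ξ₁ * ξ₂ ^ 2 / jb ξ₂) * (1 + jb ξ₂ / ξ₁ ^ 2 * r ^ 2)
        = 1/8 * (ξ₁ * ξ₂^2 / jb ξ₂) + (ξ₂^2/ξ₁ * (1/8)) * r^2 := by
      field_simp
    rw [ge_iff_le, hexp]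
    have hMge : 1/8 * (ξ₁ * ξ₂^2 / jb ξ₂) ≤ (ξ₁/4) * min (ξ₂^2) ξ₂ := by
      have hstep := mul_le_mul_of_nonneg_left hM (by linarith : (0:ℝ) ≤ ξ₁/4)
      have m0 : 0 ≤ ξ₁ * (ξ₂^2 / jb ξ₂) := by positivity
      have e1 : 1/8 * (ξ₁ * ξ₂^2 / jb ξ₂) = (ξ₁ * (ξ₂^2 / jb ξ₂))/8 := by ring
      have e2 : (ξ₁/4) * (ξ₂^2 / jb ξ₂) = (ξ₁ * (ξ₂^2 / jb ξ₂))/4 := by ring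
      rw [e2] at hstep
      rw [e1]
      linarith
    linarith

end CCaux

theorem resonance_lower_bound_low_high :
    ∃ c : ℝ, 0 < c ∧ ∃ ε : ℝ, 0 < ε ∧ ε < 1 ∧
      ∀ ξ₁ ξ₂ η₁ η₂ : ℝ, ξ₁ ≠ 0 → |ξ₁| ≤ ε * |ξ₂| →
        |Omega1 ξ₁ η₁ ξ₂ η₂| ≥
          c * (|ξ₁| * ξ₂ ^ 2 / jb ξ₂) *
            (1 + (jb ξ₂ / ξ₁ ^ 2) * ((η₁ + η₂) / (ξ₁ + ξ₂) - η₂ / ξ₂) ^ 2) := by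
  refine ⟨1/8, by norm_num, 1/8, by norm_num, by norm_num, ?_⟩
  intro ξ₁ ξ₂ η₁ η₂ h1 hle
  have h2 : ξ₂ ≠ 0 := by
    intro h
    apply h1
    rw [h, abs_zero] at hle
    have : |ξ₁| ≤ 0 := by linarith
    exact abs_eq_zero.1 (le_antisymm this (abs_nonneg _))
  rcases h2.lt_or_gt with hneg | hpos
  · -- ξ₂ < 0 : use oddness
    have hle' : |(-ξ₁)| ≤ 1/8 * (-ξ₂) := by
      rw [abs_neg]
      rw [abs_of_neg hneg] at hle
      linarith
    have hcore := CCaux.core (-ξ₁) (-ξ₂) (-η₁) (-η₂) (neg_ne_zero.2 h1) (by linarith) hle'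
    rw [CCaux.Omega1_neg, abs_neg] at hcore
    have eratio : ((-η₁) + (-η₂)) / ((-ξ₁) + (-ξ₂)) - (-η₂) / (-ξ₂)
        = (η₁ + η₂) / (ξ₁ + ξ₂) - η₂ / ξ₂ := by
      rw [show (-η₁ + -η₂ : ℝ) = -(η₁+η₂) by ring, show (-ξ₁ + -ξ₂ : ℝ) = -(ξ₁+ξ₂) by ring,
        neg_div_neg_eq, neg_div_neg_eq]
    rw [eratio, CCaux.jb_neg, neg_sq, neg_sq, abs_neg] at hcore
    exact hcore
  · have hle' : |ξ₁| ≤ 1/8 * ξ₂ := by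
      rw [abs_of_pos hpos] at hle
      linarith
    exact CCaux.core ξ₁ ξ₂ η₁ η₂ h1 hpos hle'
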